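/- Let r > 0 and let D₁, D₂, D₃ be three pairwise disjoint closed disks in the plane, each of radius at least r. Then there is no point s in the plane such that dist(s, Dᵢ) ≤ (2/√3 − 1)·r for all i = 1, 2, 3. -/
import Mathlib

open Metric Real

local notation "⟪" x ", " y "⟫" => @inner ℝ _ _ x y

lemma keyineq (t r a b : ℝ) (h1 : 1 < t) (h2 : t < 2) (hr : 0 < r)
    (ha : r ≤ a) (hb : r ≤ b) : (2*t-3)*r*(a+b) + (7-4*t)*r^2 ≤ a*b := by
  nlinarith [mul_nonneg (by linarith : (0:ℝ) ≤ a - r) (by linarith : (0:ℝ) ≤ b - r),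
    mul_nonneg (mul_nonneg (by linarith : (0:ℝ) ≤ 2 - t) hr.le) (by linarith : (0:ℝ) ≤ a - r),
    mul_nonneg (mul_nonneg (by linarith : (0:ℝ) ≤ 2 - t) hr.le) (by linarith : (0:ℝ) ≤ b - r)]

lemma aux3 {E : Type*} [NormedAddCommGroup E] [InnerProductSpace ℝ E]
    (u v w : E) (hu : ‖u‖ = 1) (hv : ‖v‖ = 1) (hw : ‖w‖ = 1)
    (huv : ⟪u, v⟫ < -(1/2)) (huw : ⟪u, w⟫ < -(1/2)) (hvw : ⟪v, w⟫ < -(1/2)) : False := by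
  have h : (0:ℝ) ≤ ⟪u + v + w, u + v + w⟫ := real_inner_self_nonneg
  simp only [inner_add_left, inner_add_right, real_inner_self_eq_norm_sq] at h
  rw [hu, hv, hw] at h
  have e1 : ⟪v, u⟫ = ⟪u, v⟫ := real_inner_comm u v
  have e2 : ⟪w, u⟫ = ⟪u, w⟫ := real_inner_comm u w
  have e3 : ⟪w, v⟫ = ⟪v, w⟫ := real_inner_comm v w
  nlinarith [h, e1, e2, e3]

lemma aux3' {E : Type*} [NormedAddCommGroup E] [InnerProductSpace ℝ E]
    (u v w : E)
    (huv : ⟪u, v⟫ < -(1/2) * (‖u‖ * ‖v‖)) (huw : ⟪u, w⟫ < -(1/2) * (‖u‖ * ‖w‖))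
    (hvw : ⟪v, w⟫ < -(1/2) * (‖v‖ * ‖w‖)) : False := by
  have hu : u ≠ 0 := by
    rintro rfl; simp at huv
  have hv : v ≠ 0 := by
    rintro rfl; simp at huv
  have hw : w ≠ 0 := by
    rintro rfl; simp at huw
  have hnu : (0:ℝ) < ‖u‖ := norm_pos_iff.mpr hu
  have hnv : (0:ℝ) < ‖v‖ := norm_pos_iff.mpr hv
  have hnw : (0:ℝ) < ‖w‖ := norm_pos_iff.mpr hw
  have key : ∀ (a b : E), 0 < ‖a‖ → 0 < ‖b‖ → ⟪a, b⟫ < -(1/2) * (‖a‖ * ‖b‖) →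
      ⟪‖a‖⁻¹ • a, ‖b‖⁻¹ • b⟫ < -(1/2) := by
    intro a b ha hb hab
    have h' : ⟪a, b⟫ / (‖a‖ * ‖b‖) < -(1/2) :=
      (div_lt_iff₀ (mul_pos ha hb)).mpr (by linarith [hab])
    rw [real_inner_smul_left, real_inner_smul_right,
      show ‖a‖⁻¹ * (‖b‖⁻¹ * ⟪a, b⟫) = ⟪a, b⟫ / (‖a‖ * ‖b‖) from by
        rw [div_eq_mul_inv, mul_inv]; ring]
    exact h'
  have nrm : ∀ (a : E), a ≠ 0 → ‖(‖a‖⁻¹ • a)‖ = 1 := by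
    intro a ha
    rw [norm_smul, norm_inv, norm_norm, inv_mul_cancel₀ (norm_pos_iff.mpr ha).ne']
  exact aux3 _ _ _ (nrm u hu) (nrm v hv) (nrm w hw)
    (key u v hnu hnv huv) (key u w hnu hnw huw) (key v w hnv hnw hvw)

lemma pair {E : Type*} [NormedAddCommGroup E] [InnerProductSpace ℝ E]
    (s a b : E) (ρa ρb ε : ℝ) (hε : 0 ≤ ε)
    (hda : dist s a ≤ ρa + ε) (hdb : dist s b ≤ ρb + ε)
    (hab : ρa + ρb < dist a b) (hkey : 3*ε*(ρa+ρb) + 3*ε^2 ≤ ρa*ρb)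
    (hρa : 0 ≤ ρa) (hρb : 0 ≤ ρb) :
    ⟪a - s, b - s⟫ < -(1/2) * (‖a - s‖ * ‖b - s‖) := by
  set u := a - s with hu
  set v := b - s with hv
  have hnu : ‖u‖ = dist s a := by rw [hu, dist_eq_norm, norm_sub_rev]
  have hnv : ‖v‖ = dist s b := by rw [hv, dist_eq_norm, norm_sub_rev]
  have hd : dist a b = ‖u - v‖ := by
    rw [dist_eq_norm, hu, hv]; congr 1; abel
  have hsq : ‖u - v‖^2 = ‖u‖^2 - 2 * ⟪u, v⟫ + ‖v‖^2 := by
    rw [@norm_sub_sq_real]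
  have h1 : ‖u‖ ≤ ρa + ε := by rw [hnu]; exact hda
  have h2 : ‖v‖ ≤ ρb + ε := by rw [hnv]; exact hdb
  have h3 : (ρa + ρb)^2 < ‖u - v‖^2 := by
    have h := hab.trans_eq hd
    nlinarith [dist_nonneg (x := a) (y := b)]
  have hun : 0 ≤ ‖u‖ := norm_nonneg u
  have hvn : 0 ≤ ‖v‖ := norm_nonneg v
  nlinarith [sq_nonneg (‖u‖ - ‖v‖), mul_le_mul h1 h2 hvn (by linarith)]

theorem stmt_0
    (r : ℝ) (hr : 0 < r)
    (c₁ c₂ c₃ : EuclideanSpace ℝ (Fin 2)) (ρ₁ ρ₂ ρ₃ : ℝ)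
    (h₁ : r ≤ ρ₁) (h₂ : r ≤ ρ₂) (h₃ : r ≤ ρ₃)
    (h12 : Disjoint (closedBall c₁ ρ₁) (closedBall c₂ ρ₂))
    (h13 : Disjoint (closedBall c₁ ρ₁) (closedBall c₃ ρ₃))
    (h23 : Disjoint (closedBall c₂ ρ₂) (closedBall c₃ ρ₃)) :
    ¬ ∃ s : EuclideanSpace ℝ (Fin 2),
      infDist s (closedBall c₁ ρ₁) ≤ (2 / Real.sqrt 3 - 1) * r ∧
      infDist s (closedBall c₂ ρ₂) ≤ (2 / Real.sqrt 3 - 1) * r ∧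
      infDist s (closedBall c₃ ρ₃) ≤ (2 / Real.sqrt 3 - 1) * r := by
  rintro ⟨s, hs₁, hs₂, hs₃⟩
  set t := Real.sqrt 3 with ht
  set ε := (2 / t - 1) * r with hεdef
  have hs3 : (0:ℝ) < t := by rw [ht]; positivity
  have hs3sq : t ^ 2 = 3 := Real.sq_sqrt (by norm_num)
  have hs3lt : t < 2 := by nlinarith
  have hs3gt : 1 < t := by nlinarith
  have hq : 2 / t = 2 * t / 3 := by
    rw [div_eq_div_iff hs3.ne' (by norm_num : (3:ℝ) ≠ 0)]; nlinarith
  have hεe : ε = (2 * t / 3 - 1) * r := by rw [hεdef, hq]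
  have hε : 0 ≤ ε := by
    rw [hεe]; nlinarith
  have hρ₁ : 0 ≤ ρ₁ := le_trans hr.le h₁
  have hρ₂ : 0 ≤ ρ₂ := le_trans hr.le h₂
  have hρ₃ : 0 ≤ ρ₃ := le_trans hr.le h₃
  have dist_bound : ∀ (c : EuclideanSpace ℝ (Fin 2)) (ρ : ℝ), 0 ≤ ρ →
      infDist s (closedBall c ρ) ≤ ε → dist s c ≤ ρ + ε := by
    intro c ρ hρ hinf
    obtain ⟨y, hy, hyd⟩ := (isCompact_closedBall c ρ).exists_infDist_eq_dist
      ⟨c, mem_closedBall_self hρ⟩ s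
    calc dist s c ≤ dist s y + dist y c := dist_triangle s y c
    _ ≤ ε + ρ := add_le_add (hyd ▸ hinf) (mem_closedBall.mp hy)
    _ = ρ + ε := by ring
  have hd1 := dist_bound c₁ ρ₁ hρ₁ hs₁
  have hd2 := dist_bound c₂ ρ₂ hρ₂ hs₂
  have hd3 := dist_bound c₃ ρ₃ hρ₃ hs₃
  have sep12 : ρ₁ + ρ₂ < dist c₁ c₂ := (disjoint_closedBall_closedBall_iff hρ₁ hρ₂).mp h12
  have sep13 : ρ₁ + ρ₃ < dist c₁ c₃ := (disjoint_closedBall_closedBall_iff hρ₁ hρ₃).mp h13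
  have sep23 : ρ₂ + ρ₃ < dist c₂ c₃ := (disjoint_closedBall_closedBall_iff hρ₂ hρ₃).mp h23
  have h3e : 3 * ε = (2 * t - 3) * r := by rw [hεe]; ring
  have h3e2 : 3 * ε ^ 2 = (7 - 4 * t) * r ^ 2 := by
    rw [hεe]; nlinarith [hs3sq]
  have hkey : ∀ a b : ℝ, r ≤ a → r ≤ b → 3*ε*(a+b) + 3*ε^2 ≤ a*b := by
    intro a b ha hb
    rw [h3e2, show 3*ε*(a+b) = (3*ε)*(a+b) by ring, h3e]
    exact keyineq t r a b hs3gt hs3lt hr ha hb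
  exact aux3' (c₁ - s) (c₂ - s) (c₃ - s)
    (pair s c₁ c₂ ρ₁ ρ₂ ε hε hd1 hd2 sep12 (hkey ρ₁ ρ₂ h₁ h₂) hρ₁ hρ₂)
    (pair s c₁ c₃ ρ₁ ρ₃ ε hε hd1 hd3 sep13 (hkey ρ₁ ρ₃ h₁ h₃) hρ₁ hρ₃)
    (pair s c₂ c₃ ρ₂ ρ₃ ε hε hd2 hd3 sep23 (hkey ρ₂ ρ₃ h₂ h₃) hρ₂ hρ₃)
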